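/- Let S be a commutative ring, ∂ : S → S a derivation, and ∫ : S → S an additive map with ∂(∫ f) = f for all f ∈ S and ∫(c*f) = c*(∫ f) for all c ∈ ker ∂ and f ∈ S (so (S, ∂, ∫) is a commutative integro-differential ring). Let R be a subring of S with ∂(R) ⊆ R, and C := R ∩ ker ∂. Let Q : R → R be additive with Q(c*f) = c*(Q f) for all c ∈ C and f ∈ R, and with ∂(Q(∂ f)) = ∂ f and Q(∂(Q f)) = Q f for all f ∈ R (a quasi-integration on R). Let a : I → R be a family with Q(a i) = 0 for all i ∈ I, and assume: (1) the family a is linearly independent over C (with R viewed as a C-module); (2) there is a C-submodule N of R with Submodule.span C (Set.range a) ⊓ N = ⊥ and Submodule.span C (Set.range a) ⊔ N = {f ∈ R | Q f = 0} (the C-span of the a i is complemented in ker Q); (3) for every nonzero r ∈ R there exist n ∈ ℕ and b_0, …, b_n ∈ R such that Σ_{i=0}^{n} b_i * ∂^[i](r) is a nonzero element of C (every nonzero differential ideal of R contains a nonzero constant). Define σ : List I → S by σ([]) = 1 and σ(i :: W) = ∫((a i) * σ(W)). Then the family (σ W)_{W : List I} of nested integrals is linearly independent over R, with S viewed as an R-module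 via the inclusion R ⊆ S. -/

import Mathlib

set_option linter.unusedSectionVars false
set_option maxHeartbeats 1000000

/-- Nested integral `σ(W) = ∫ a_{w₁} ∫ a_{w₂} ⋯ ∫ a_{w_k}` of the word `W` over the
family of integrands `a`. -/
def nestedIntWord {S : Type*} [CommRing S] {I : Type*} (intg : S → S) (a : I → S) :
    List I → S
  | [] => 1
  | i :: W => intg (a i * nestedIntWord intg a W)

/-- `x` is a `C`-linear combination of the `a i`, where `C = R ∩ ker der`. -/
def InConstSpan {S : Type*} [CommRing S] {I : Type*} (der : S → S) (R : Subring S)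
    (a : I → S) (x : S) : Prop :=
  ∃ (t : Finset I) (c : I → S), (∀ i : I, c i ∈ R ∧ der (c i) = 0) ∧
    x = ∑ i ∈ t, c i * a i

/-- Coefficient picked up when differentiating a nested integral: the integrand
attached to the first letter of the word (or `0` for the empty word). -/
def headCoeff {S : Type*} [CommRing S] {I : Type*} (a : I → S) : List I → S
  | [] => 0
  | i :: _ => a i

/-- One differentiation step applied to a linear combination of nested integrals
supported on the (tail-closed) finite set `t` of words: the new coefficient of the
word `V`. -/
def DStep {S : Type*} [CommRing S] {I : Type*} [DecidableEq I] (der : S → S) (a : I → S)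
    (t : Finset (List I)) (r : List I → S) : List I → S :=
  fun V => der (r V) + ∑ W ∈ t.filter (fun W => W ≠ [] ∧ W.tail = V), r W * headCoeff a W

section aux
variable {S : Type*} [CommRing S] {I : Type*} [DecidableEq I]
variable (der intg : S → S) (a : I → S)

lemma der_zero' (hder_add : ∀ f g : S, der (f + g) = der f + der g) : der 0 = 0 := by
  have h := hder_add 0 0
  rw [add_zero] at h
  exact (left_eq_add.mp h)

lemma der_sum' (hder_add : ∀ f g : S, der (f + g) = der f + der g)
    {α : Type*} (s : Finset α) (f : α → S) :
    der (∑ x ∈ s, f x) = ∑ x ∈ s, der (f x) := by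
  classical
  induction s using Finset.induction with
  | empty => simpa using der_zero' der hder_add
  | insert _ _ h ih => rw [Finset.sum_insert h, Finset.sum_insert h, hder_add, ih]

lemma der_one' (hleibniz : ∀ f g : S, der (f * g) = der f * g + f * der g) : der 1 = 0 := by
  have h := hleibniz 1 1
  simp only [mul_one, one_mul] at h
  exact (left_eq_add.mp h)

lemma der_iter_zero (hder_add : ∀ f g : S, der (f + g) = der f + der g) (k : ℕ) :
    der^[k] (0 : S) = 0 := by
  induction k with
  | zero => rfl
  | succ k ih => rw [Function.iterate_succ_apply', ih, der_zero' der hder_add]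

lemma der_nested (hleibniz : ∀ f g : S, der (f * g) = der f * g + f * der g)
    (hsection : ∀ f : S, der (intg f) = f) (W : List I) :
    der (nestedIntWord intg a W) = headCoeff a W * nestedIntWord intg a W.tail := by
  cases W with
  | nil => simp [nestedIntWord, headCoeff, der_one' der hleibniz]
  | cons i V => simp [nestedIntWord, headCoeff, hsection]

lemma headCoeff_mem (R : Subring S) (haR : ∀ i : I, a i ∈ R) (W : List I) :
    headCoeff a W ∈ R := by
  cases W with
  | nil => exact R.zero_mem
  | cons i V => exact haR i

lemma DStep_mem (R : Subring S) (hRder : ∀ f ∈ R, der f ∈ R) (haR : ∀ i : I, a i ∈ R)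
    (t : Finset (List I)) (r : List I → S) (hr : ∀ W, r W ∈ R) (V : List I) :
    DStep der a t r V ∈ R :=
  add_mem (hRder _ (hr V)) (sum_mem fun W _ => mul_mem (hr W) (headCoeff_mem a R haR W))

lemma DStep_top (t : Finset (List I)) (r : List I → S) (V : List I)
    (h : ∀ W ∈ t, ¬(W ≠ [] ∧ W.tail = V)) : DStep der a t r V = der (r V) := by
  unfold DStep
  rw [Finset.filter_false_of_mem h]
  simp

lemma DStep_rel (hder_add : ∀ f g : S, der (f + g) = der f + der g)
    (hleibniz : ∀ f g : S, der (f * g) = der f * g + f * der g)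
    (hsection : ∀ f : S, der (intg f) = f)
    (t : Finset (List I)) (hclosed : ∀ W ∈ t, W.tail ∈ t) (r : List I → S)
    (hsum : ∑ W ∈ t, r W * nestedIntWord intg a W = 0) :
    ∑ V ∈ t, DStep der a t r V * nestedIntWord intg a V = 0 := by
  have h0 : ∑ W ∈ t, (der (r W) * nestedIntWord intg a W
      + r W * (headCoeff a W * nestedIntWord intg a W.tail)) = 0 := by
    have h1 := congrArg der hsum
    rw [der_sum' der hder_add, der_zero' der hder_add] at h1
    rw [← h1]
    exact Finset.sum_congr rfl fun W _ => by
      rw [hleibniz, der_nested der intg a hleibniz hsection]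
  rw [Finset.sum_add_distrib] at h0
  have hB : ∑ V ∈ t, (∑ W ∈ t.filter (fun W => W ≠ [] ∧ W.tail = V), r W * headCoeff a W)
        * nestedIntWord intg a V
      = ∑ W ∈ t, r W * (headCoeff a W * nestedIntWord intg a W.tail) := by
    have step1 : ∀ V ∈ t,
        (∑ W ∈ t.filter (fun W => W ≠ [] ∧ W.tail = V), r W * headCoeff a W)
          * nestedIntWord intg a V
        = ∑ W ∈ t.filter (fun W => W.tail = V),
            r W * (headCoeff a W * nestedIntWord intg a W.tail) := by
      intro V _
      rw [Finset.sum_mul]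
      have e1 : ∑ W ∈ t.filter (fun W => W ≠ [] ∧ W.tail = V),
          r W * headCoeff a W * nestedIntWord intg a V
          = ∑ W ∈ t.filter (fun W => W ≠ [] ∧ W.tail = V),
            r W * (headCoeff a W * nestedIntWord intg a W.tail) := by
        refine Finset.sum_congr rfl fun W hW => ?_
        rw [Finset.mem_filter] at hW
        rw [hW.2.2, mul_assoc]
      rw [e1]
      have e2 : t.filter (fun W => W ≠ [] ∧ W.tail = V)
          = (t.filter (fun W => W.tail = V)).filter (fun W => W ≠ []) := by
        rw [Finset.filter_filter]
        exact Finset.filter_congr fun W _ => by tauto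
      rw [e2]
      refine Finset.sum_filter_of_ne fun W _ h => ?_
      intro hnil
      apply h
      subst hnil
      simp [headCoeff]
    rw [Finset.sum_congr rfl step1]
    exact Finset.sum_fiberwise_of_maps_to hclosed _
  unfold DStep
  calc ∑ V ∈ t, (der (r V) + ∑ W ∈ t.filter (fun W => W ≠ [] ∧ W.tail = V),
        r W * headCoeff a W) * nestedIntWord intg a V
      = ∑ V ∈ t, der (r V) * nestedIntWord intg a V
        + ∑ V ∈ t, (∑ W ∈ t.filter (fun W => W ≠ [] ∧ W.tail = V), r W * headCoeff a W)
          * nestedIntWord intg a V := by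
        rw [← Finset.sum_add_distrib]
        exact Finset.sum_congr rfl fun V _ => add_mul _ _ _
    _ = 0 := by rw [hB]; exact h0

end aux

/-- In a commutative integro-differential ring `(S, der, intg)` with a
differential subring `R` carrying a quasi-integration `Q`, if the integrands `a i ∈ ker Q`
are linearly independent over the constants `C = R ∩ ker der`, their `C`-span is complemented
in `ker Q`, and every nonzero differential ideal of `R` contains a nonzero constant, then
the nested integrals `σ(W)`, for words `W`, are linearly independent over `R`. -/
theorem stmt_8 {S : Type*} [CommRing S] {I : Type*} (der intg : S → S)
    (hder_add : ∀ f g : S, der (f + g) = der f + der g)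
    (hleibniz : ∀ f g : S, der (f * g) = der f * g + f * der g)
    (hintg_add : ∀ f g : S, intg (f + g) = intg f + intg g)
    (hsection : ∀ f : S, der (intg f) = f)
    (hintg_lin : ∀ c f : S, der c = 0 → intg (c * f) = c * intg f)
    (R : Subring S) (hRder : ∀ f ∈ R, der f ∈ R)
    (Q : S → S) (hQmem : ∀ f ∈ R, Q f ∈ R)
    (hQadd : ∀ f ∈ R, ∀ g ∈ R, Q (f + g) = Q f + Q g)
    (hQlin : ∀ c ∈ R, ∀ f ∈ R, der c = 0 → Q (c * f) = c * Q f)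
    (hQ1 : ∀ f ∈ R, der (Q (der f)) = der f)
    (hQ2 : ∀ f ∈ R, Q (der (Q f)) = Q f)
    (a : I → S) (haR : ∀ i : I, a i ∈ R) (haQ : ∀ i : I, Q (a i) = 0)
    -- (1) the family `a` is linearly independent over `C`:
    (hindep : ∀ (t : Finset I) (c : I → S), (∀ i : I, c i ∈ R ∧ der (c i) = 0) →
      (∑ i ∈ t, c i * a i) = 0 → ∀ i ∈ t, c i = 0)
    -- (2) the `C`-span of the `a i` is complemented in `ker Q` by a `C`-submodule `N`:
    (hcompl : ∃ N : Set S, N ⊆ (R : Set S) ∧ (0 : S) ∈ N ∧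
      (∀ x ∈ N, ∀ y ∈ N, x + y ∈ N) ∧
      (∀ c ∈ R, der c = 0 → ∀ x ∈ N, c * x ∈ N) ∧
      (∀ x : S, InConstSpan der R a x → x ∈ N → x = 0) ∧
      (∀ x : S, (x ∈ R ∧ Q x = 0) ↔
        ∃ s : S, InConstSpan der R a s ∧ ∃ y ∈ N, x = s + y))
    -- (3) every nonzero differential ideal of `R` contains a nonzero constant:
    (hconst : ∀ r ∈ R, r ≠ 0 → ∃ (n : ℕ) (b : ℕ → S), (∀ i : ℕ, b i ∈ R) ∧
      der (∑ i ∈ Finset.range (n + 1), b i * der^[i] r) = 0 ∧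
      (∑ i ∈ Finset.range (n + 1), b i * der^[i] r) ≠ 0) :
    -- conclusion: the nested integrals are linearly independent over `R`:
    ∀ (t : Finset (List I)) (r : List I → S), (∀ W : List I, r W ∈ R) →
      (∑ W ∈ t, r W * nestedIntWord intg a W) = 0 → ∀ W ∈ t, r W = 0 := by
  letI : DecidableEq I := Classical.decEq I
  classical
  -- basic facts about Q
  have hQ0 : Q 0 = 0 := by
    have h := hQadd 0 R.zero_mem 0 R.zero_mem
    rw [add_zero] at h
    exact (left_eq_add.mp h)
  have hQneg : ∀ f ∈ R, Q (-f) = - Q f := by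
    intro f hf
    have h := hQadd f hf (-f) (neg_mem hf)
    rw [add_neg_cancel, hQ0] at h
    exact (eq_neg_of_add_eq_zero_right h.symm)
  have hQsum : ∀ (s : Finset (List I)) (f : List I → S), (∀ x ∈ s, f x ∈ R) →
      Q (∑ x ∈ s, f x) = ∑ x ∈ s, Q (f x) := by
    intro s
    induction s using Finset.induction with
    | empty => intro f _; simpa using hQ0
    | insert _ _ hnot ih =>
      intro f hf
      rw [Finset.sum_insert hnot, Finset.sum_insert hnot,
        hQadd _ (hf _ (Finset.mem_insert_self _ _)) _
          (sum_mem fun x hx => hf x (Finset.mem_insert_of_mem hx)),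
        ih f (fun x hx => hf x (Finset.mem_insert_of_mem hx))]
  -- main induction on the maximal word length
  suffices P : ∀ n : ℕ, ∀ (t : Finset (List I)) (r : List I → S), (∀ W, r W ∈ R) →
      (∀ W ∈ t, W.length ≤ n) → ∑ W ∈ t, r W * nestedIntWord intg a W = 0 →
      ∀ W ∈ t, r W = 0 by
    intro t r hrR hsum W hW
    exact P (t.sup List.length) t r hrR (fun V hV => Finset.le_sup hV) hsum W hW
  intro n
  induction n with
  | zero =>
    intro t r hrR hlen hsum W hW
    have hWn : W = [] := List.length_eq_zero_iff.mp (Nat.le_zero.mp (hlen W hW))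
    have hsingle : ∑ V ∈ t, r V * nestedIntWord intg a V = r W * nestedIntWord intg a W := by
      refine Finset.sum_eq_single_of_mem W hW fun V hV hne => absurd ?_ hne
      have hVn : V = [] := List.length_eq_zero_iff.mp (Nat.le_zero.mp (hlen V hV))
      rw [hVn, hWn]
    have h2 : r W * nestedIntWord intg a W = 0 := by rw [← hsingle, hsum]
    subst hWn
    simpa [nestedIntWord] using h2
  | succ n ih =>
    -- key step: all top-length coefficients of a tail-closed relation vanish
    have key : ∀ t : Finset (List I), (∀ V ∈ t, V.tail ∈ t) → (∀ V ∈ t, V.length ≤ n + 1) →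
        ∀ (m : ℕ) (r : List I → S), (∀ W, r W ∈ R) →
        ∑ W ∈ t, r W * nestedIntWord intg a W = 0 →
        (t.filter (fun W => W.length = n + 1 ∧ r W ≠ 0)).card ≤ m →
        ∀ W ∈ t, W.length = n + 1 → r W = 0 := by
      intro t hclosed hbound m
      induction m with
      | zero =>
        intro r hrR hsum hcard W hW hlen
        by_contra hne
        have hmem : W ∈ t.filter (fun W => W.length = n + 1 ∧ r W ≠ 0) :=
          Finset.mem_filter.mpr ⟨hW, hlen, hne⟩
        have := Finset.card_pos.mpr ⟨W, hmem⟩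
        omega
      | succ m ihm =>
        intro r hrR hsum hcard W hW hlen
        by_cases hle : (t.filter (fun W => W.length = n + 1 ∧ r W ≠ 0)).card ≤ m
        · exact ihm r hrR hsum hle W hW hlen
        exfalso
        have hcardeq : (t.filter (fun W => W.length = n + 1 ∧ r W ≠ 0)).card = m + 1 := by
          omega
        have hpos : 0 < (t.filter (fun W => W.length = n + 1 ∧ r W ≠ 0)).card := by omega
        obtain ⟨W0, hW0mem⟩ := Finset.card_pos.mp hpos
        have hW0t : W0 ∈ t := (Finset.mem_filter.mp hW0mem).1
        have hW0len : W0.length = n + 1 := (Finset.mem_filter.mp hW0mem).2.1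
        have hW0ne : r W0 ≠ 0 := (Finset.mem_filter.mp hW0mem).2.2
        obtain ⟨n', b, hbR, hderc0, hc0ne⟩ := hconst (r W0) (hrR W0) hW0ne
        set c0 := ∑ k ∈ Finset.range (n' + 1), b k * der^[k] (r W0) with hc0
        -- words of maximal length have no extensions inside t
        have hnoext : ∀ V : List I, V.length = n + 1 → ∀ W' ∈ t, ¬(W' ≠ [] ∧ W'.tail = V) := by
          intro V hV W' hW't h
          obtain ⟨hne, htl⟩ := h
          have hb := hbound W' hW't
          have hlenW : W'.length = V.length + 1 := by
            cases W' with
            | nil => exact absurd rfl hne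
            | cons i U =>
              simp only [List.tail_cons] at htl
              subst htl
              simp
          omega
        -- iterated differentiation steps
        have hiter_mem : ∀ k V, ((DStep der a t)^[k] r) V ∈ R := by
          intro k
          induction k with
          | zero =>
            intro V
            simp only [Function.iterate_zero_apply]
            exact hrR V
          | succ k ihk =>
            intro V
            rw [Function.iterate_succ_apply']
            exact DStep_mem der a R hRder haR t _ ihk V
        have hiter_rel : ∀ k,
            ∑ V ∈ t, ((DStep der a t)^[k] r) V * nestedIntWord intg a V = 0 := by
          intro k
          induction k with
          | zero =>
            simp only [Function.iterate_zero_apply]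
            exact hsum
          | succ k ihk =>
            rw [Function.iterate_succ_apply']
            exact DStep_rel der intg a hder_add hleibniz hsection t hclosed _ ihk
        have hiter_top : ∀ k, ∀ V ∈ t, V.length = n + 1 →
            ((DStep der a t)^[k] r) V = der^[k] (r V) := by
          intro k
          induction k with
          | zero => intro V _ _; simp
          | succ k ihk =>
            intro V hV hl
            rw [Function.iterate_succ_apply', Function.iterate_succ_apply',
              DStep_top der a t _ V (hnoext V hl), ihk V hV hl]
        -- the combined relation with constant leading coefficient at W0
        set rs : List I → S :=
          fun V => ∑ k ∈ Finset.range (n' + 1), b k * ((DStep der a t)^[k] r) V with hrs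
        have hrsR : ∀ V, rs V ∈ R := fun V =>
          sum_mem fun k _ => mul_mem (hbR k) (hiter_mem k V)
        have hrs_top : ∀ V ∈ t, V.length = n + 1 →
            rs V = ∑ k ∈ Finset.range (n' + 1), b k * der^[k] (r V) := by
          intro V hV hl
          simp only [hrs]
          exact Finset.sum_congr rfl fun k _ => by rw [hiter_top k V hV hl]
        have hrsW0 : rs W0 = c0 := by
          rw [hrs_top W0 hW0t hW0len]
        have hrs_rel : ∑ V ∈ t, rs V * nestedIntWord intg a V = 0 := by
          have h1 : ∑ V ∈ t, rs V * nestedIntWord intg a V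
              = ∑ k ∈ Finset.range (n' + 1), ∑ V ∈ t,
                  b k * (((DStep der a t)^[k] r) V * nestedIntWord intg a V) := by
            rw [Finset.sum_comm]
            refine Finset.sum_congr rfl fun V _ => ?_
            simp only [hrs]
            rw [Finset.sum_mul]
            exact Finset.sum_congr rfl fun k _ => by ring
          rw [h1]
          refine Finset.sum_eq_zero fun k _ => ?_
          rw [← Finset.mul_sum, hiter_rel k, mul_zero]
        -- the differentiated combined relation
        have hr2R : ∀ V, DStep der a t rs V ∈ R := DStep_mem der a R hRder haR t rs hrsR
        have hr2rel : ∑ V ∈ t, DStep der a t rs V * nestedIntWord intg a V = 0 :=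
          DStep_rel der intg a hder_add hleibniz hsection t hclosed rs hrs_rel
        have hsubset : t.filter (fun V => V.length = n + 1 ∧ DStep der a t rs V ≠ 0)
            ⊆ (t.filter (fun W => W.length = n + 1 ∧ r W ≠ 0)).erase W0 := by
          intro V hV
          rw [Finset.mem_filter] at hV
          obtain ⟨hVt, hVlen, hVne⟩ := hV
          have hDval : DStep der a t rs V = der (rs V) :=
            DStep_top der a t rs V (hnoext V hVlen)
          have hrVne : r V ≠ 0 := by
            intro h
            apply hVne
            rw [hDval, hrs_top V hVt hVlen]
            have hz : ∑ k ∈ Finset.range (n' + 1), b k * der^[k] (r V) = 0 := by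
              refine Finset.sum_eq_zero fun k _ => ?_
              rw [h, der_iter_zero der hder_add, mul_zero]
            rw [hz, der_zero' der hder_add]
          have hVW0 : V ≠ W0 := by
            intro h
            subst h
            apply hVne
            rw [hDval, hrsW0]
            exact hderc0
          exact Finset.mem_erase.mpr ⟨hVW0, Finset.mem_filter.mpr ⟨hVt, hVlen, hrVne⟩⟩
        have hcard2 : (t.filter (fun V => V.length = n + 1 ∧ DStep der a t rs V ≠ 0)).card
            ≤ m := by
          have hc := Finset.card_le_card hsubset
          rw [Finset.card_erase_of_mem hW0mem, hcardeq] at hc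
          simpa using hc
        -- by the inner induction hypothesis, all top coefficients of rs are constants
        have htopconst : ∀ V ∈ t, V.length = n + 1 → der (rs V) = 0 := by
          intro V hVt hVlen
          have h := ihm (DStep der a t rs) hr2R hr2rel hcard2 V hVt hVlen
          rwa [DStep_top der a t rs V (hnoext V hVlen)] at h
        -- the differentiated relation lives on words of length ≤ n
        have hrel_low : ∑ V ∈ t.filter (fun V => V.length ≤ n),
            DStep der a t rs V * nestedIntWord intg a V = 0 := by
          refine Eq.trans (Finset.sum_filter_of_ne fun V hV hne => ?_) hr2rel
          by_contra hgt
          have hVlen : V.length = n + 1 := by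
            have := hbound V hV
            omega
          apply hne
          rw [DStep_top der a t rs V (hnoext V hVlen), htopconst V hV hVlen, zero_mul]
        have hlow := ih (t.filter (fun V => V.length ≤ n)) (DStep der a t rs) hr2R
          (fun V hV => (Finset.mem_filter.mp hV).2) hrel_low
        -- look at the tail of W0
        have hW0nil : W0 ≠ [] := by
          intro h
          rw [h] at hW0len
          simp at hW0len
        obtain ⟨i0, V0, hW0eq⟩ := List.exists_cons_of_ne_nil hW0nil
        have hV0t : V0 ∈ t := by
          have h := hclosed W0 hW0t
          rw [hW0eq] at h
          simpa using h
        have hV0len : V0.length = n := by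
          rw [hW0eq] at hW0len
          simpa using hW0len
        have hDV0 : DStep der a t rs V0 = 0 :=
          hlow V0 (Finset.mem_filter.mpr ⟨hV0t, by omega⟩)
        have hDV0' : der (rs V0)
            + ∑ W' ∈ t.filter (fun W' => W' ≠ [] ∧ W'.tail = V0), rs W' * headCoeff a W'
            = 0 := hDV0
        -- members of the fiber over V0 are top words with constant rs-coefficients
        have hFtop : ∀ W' ∈ t.filter (fun W' => W' ≠ [] ∧ W'.tail = V0),
            W'.length = n + 1 ∧ der (rs W') = 0 := by
          intro W' hW'
          obtain ⟨hW't, hW'nil, hW'tl⟩ := Finset.mem_filter.mp hW'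
          have hlenW : W'.length = n + 1 := by
            cases W' with
            | nil => exact absurd rfl hW'nil
            | cons i U =>
              simp only [List.tail_cons] at hW'tl
              subst hW'tl
              simp [hV0len]
          exact ⟨hlenW, htopconst W' hW't hlenW⟩
        -- Q kills the fiber sum
        have hQs : Q (∑ W' ∈ t.filter (fun W' => W' ≠ [] ∧ W'.tail = V0),
            rs W' * headCoeff a W') = 0 := by
          rw [hQsum _ _ (fun W' _ => mul_mem (hrsR W') (headCoeff_mem a R haR W'))]
          refine Finset.sum_eq_zero fun W' hW' => ?_
          have hW'nil : W' ≠ [] := ((Finset.mem_filter.mp hW').2).1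
          obtain ⟨i, U, hW'eq⟩ := List.exists_cons_of_ne_nil hW'nil
          obtain ⟨_, hderW'⟩ := hFtop W' hW'
          subst hW'eq
          rw [show headCoeff a (i :: U) = a i from rfl,
            hQlin _ (hrsR _) _ (haR i) hderW', haQ i, mul_zero]
        set s0 := ∑ W' ∈ t.filter (fun W' => W' ≠ [] ∧ W'.tail = V0),
          rs W' * headCoeff a W' with hs0
        have hs0R : s0 ∈ R := sum_mem fun W' _ => mul_mem (hrsR W') (headCoeff_mem a R haR W')
        have hders0 : der (rs V0) = - s0 := eq_neg_of_add_eq_zero_left hDV0'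
        have hQder : Q (der (rs V0)) = 0 := by
          rw [hders0, hQneg s0 hs0R, hQs, neg_zero]
        have hder_rsV0 : der (rs V0) = 0 := by
          have h1 := hQ1 (rs V0) (hrsR V0)
          rw [hQder, der_zero' der hder_add] at h1
          exact h1.symm
        have hs0zero : s0 = 0 := by
          have h := hDV0'
          rw [hder_rsV0, zero_add] at h
          exact h
        -- re-index the fiber sum over head letters
        letI : Inhabited I := ⟨i0⟩
        have hWform : ∀ W' ∈ t.filter (fun W' => W' ≠ [] ∧ W'.tail = V0),
            W' = W'.headI :: V0 := by
          intro W' hW'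
          obtain ⟨hW't, hW'nil, hW'tl⟩ := Finset.mem_filter.mp hW'
          cases W' with
          | nil => exact absurd rfl hW'nil
          | cons i U =>
            simp only [List.tail_cons] at hW'tl
            subst hW'tl
            rfl
        set s' := (t.filter (fun W' => W' ≠ [] ∧ W'.tail = V0)).image List.headI with hs'
        have himg : t.filter (fun W' => W' ≠ [] ∧ W'.tail = V0)
            = s'.image (fun i => i :: V0) := by
          ext X
          constructor
          · intro hX
            exact Finset.mem_image.mpr
              ⟨X.headI, Finset.mem_image.mpr ⟨X, hX, rfl⟩, (hWform X hX).symm⟩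
          · intro hX
            obtain ⟨i, hi, hXeq⟩ := Finset.mem_image.mp hX
            obtain ⟨W', hW', hW'eq⟩ := Finset.mem_image.mp hi
            have hWX : W' = X := by
              rw [hWform W' hW', hW'eq, hXeq]
            exact hWX ▸ hW'
        have hinj : ∀ i ∈ s', ∀ j ∈ s', i :: V0 = j :: V0 → i = j := by
          intro i _ j _ h
          simpa using h
        have hsum_img : ∑ i ∈ s', rs (i :: V0) * a i = 0 := by
          have h1 : ∑ W' ∈ t.filter (fun W' => W' ≠ [] ∧ W'.tail = V0),
              rs W' * headCoeff a W'
              = ∑ i ∈ s', rs (i :: V0) * headCoeff a (i :: V0) := by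
            rw [himg]
            exact Finset.sum_image hinj
          have h2 : ∑ i ∈ s', rs (i :: V0) * headCoeff a (i :: V0)
              = ∑ i ∈ s', rs (i :: V0) * a i :=
            Finset.sum_congr rfl fun i _ => rfl
          rw [← h2, ← h1, ← hs0]
          exact hs0zero
        -- apply independence of the a i over the constants
        set cc : I → S := fun i => if i :: V0 ∈ t then rs (i :: V0) else 0 with hcc
        have hccprop : ∀ i, cc i ∈ R ∧ der (cc i) = 0 := by
          intro i
          simp only [hcc]
          split
          · next h =>
            refine ⟨hrsR _, htopconst _ h ?_⟩
            simp [hV0len]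
          · exact ⟨R.zero_mem, der_zero' der hder_add⟩
        have hccsum : ∑ i ∈ s', cc i * a i = 0 := by
          rw [← hsum_img]
          refine Finset.sum_congr rfl fun i hi => ?_
          have hmem : i :: V0 ∈ t := by
            have h3 : i :: V0 ∈ t.filter (fun W' => W' ≠ [] ∧ W'.tail = V0) := by
              rw [himg]
              exact Finset.mem_image_of_mem _ hi
            exact (Finset.mem_filter.mp h3).1
          simp only [hcc]
          rw [if_pos hmem]
        have hW0F : W0 ∈ t.filter (fun W' => W' ≠ [] ∧ W'.tail = V0) := by
          refine Finset.mem_filter.mpr ⟨hW0t, hW0nil, ?_⟩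
          rw [hW0eq]
          rfl
        have hi0 : i0 ∈ s' := by
          rw [hs']
          refine Finset.mem_image.mpr ⟨W0, hW0F, ?_⟩
          rw [hW0eq]
          rfl
        have hcc0 := hindep s' cc hccprop hccsum i0 hi0
        have hW0t' : i0 :: V0 ∈ t := by rwa [← hW0eq]
        simp only [hcc] at hcc0
        rw [if_pos hW0t', ← hW0eq, hrsW0] at hcc0
        exact hc0ne hcc0
    -- now the general case at level n+1: close the support under tails
    intro t r hrR hbound hsum W hW
    set t' := t.biUnion (fun W => W.tails.toFinset) with ht'
    set r' : List I → S := fun V => if V ∈ t then r V else 0 with hr'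
    have hsub : t ⊆ t' := by
      intro V hV
      exact Finset.mem_biUnion.mpr ⟨V, hV, by rw [List.mem_toFinset, List.mem_tails]⟩
    have hclosed : ∀ V ∈ t', V.tail ∈ t' := by
      intro V hV
      obtain ⟨W', hW', hVW'⟩ := Finset.mem_biUnion.mp hV
      rw [List.mem_toFinset, List.mem_tails] at hVW'
      exact Finset.mem_biUnion.mpr ⟨W', hW', by
        rw [List.mem_toFinset, List.mem_tails]
        exact (List.tail_suffix V).trans hVW'⟩
    have hbound' : ∀ V ∈ t', V.length ≤ n + 1 := by
      intro V hV
      obtain ⟨W', hW', hVW'⟩ := Finset.mem_biUnion.mp hV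
      rw [List.mem_toFinset, List.mem_tails] at hVW'
      exact le_trans hVW'.length_le (hbound W' hW')
    have hr'R : ∀ V, r' V ∈ R := by
      intro V
      simp only [hr']
      split
      · exact hrR V
      · exact R.zero_mem
    have hsum' : ∑ V ∈ t', r' V * nestedIntWord intg a V = 0 := by
      rw [← Finset.sum_subset hsub (fun V _ hV => by simp only [hr', if_neg hV, zero_mul])]
      rw [← hsum]
      exact Finset.sum_congr rfl fun V hV => by simp only [hr', if_pos hV]
    have htop : ∀ V ∈ t', V.length = n + 1 → r' V = 0 := fun V hV hlen =>
      key t' hclosed hbound' (t'.filter (fun X => X.length = n + 1 ∧ r' X ≠ 0)).card r'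
        hr'R hsum' le_rfl V hV hlen
    have hlowrel : ∑ V ∈ t'.filter (fun V => V.length ≤ n),
        r' V * nestedIntWord intg a V = 0 := by
      refine Eq.trans (Finset.sum_filter_of_ne fun V hV hne => ?_) hsum'
      by_contra hgt
      have hlen : V.length = n + 1 := by
        have := hbound' V hV
        omega
      exact hne (by rw [htop V hV hlen, zero_mul])
    have hlow := ih (t'.filter (fun V => V.length ≤ n)) r' hr'R
      (fun V hV => (Finset.mem_filter.mp hV).2) hlowrel
    have hWt' : W ∈ t' := hsub hW
    have hfin : r' W = 0 := by
      by_cases hl : W.length = n + 1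
      · exact htop W hWt' hl
      · refine hlow W (Finset.mem_filter.mpr ⟨hWt', ?_⟩)
        have := hbound W hW
        omega
    simpa only [hr', if_pos hW] using hfin
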